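/- Let n ≥ 1. The number of tuples (k_1, …, k_n) of positive integers satisfying k_{i+1} ≥ k_i − 1 for all 1 ≤ i < n and k_n = 1 equals the n-th Catalan number C_n = (1/(n+1))·binom(2n, n). -/

import Mathlib

private def L7 : ℕ → ℕ → Finset (List ℕ)
  | 0, _ => {[]}
  | m + 1, b => (Finset.Icc 1 b).biUnion fun v => (L7 m (v + 1)).image fun l => v :: l

private lemma mem_L7 : ∀ (m b : ℕ) (l : List ℕ),
    l ∈ L7 m (b + 1) ↔ l.length = m ∧ (∀ x ∈ l, 0 < x) ∧
      List.Chain (fun x y => y ≤ x + 1) b l := by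
  intro m
  induction m with
  | zero =>
    intro b l
    simp only [L7, Finset.mem_singleton]
    constructor
    · rintro rfl; simpa using List.Chain.nil
    · rintro ⟨h, -, -⟩; exact List.length_eq_zero_iff.mp h
  | succ m ih =>
    intro b l
    simp only [L7, Finset.mem_biUnion, Finset.mem_image, Finset.mem_Icc]
    constructor
    · rintro ⟨v, ⟨hv1, hv2⟩, t, ht, rfl⟩
      obtain ⟨hlen, hpos, hchain⟩ := (ih v t).mp ht
      refine ⟨by simp [hlen], ?_, ?_⟩
      · intro x hx
        rcases List.mem_cons.mp hx with rfl | hx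
        · exact hv1
        · exact hpos x hx
      · exact List.chain_cons.mpr ⟨hv2, hchain⟩
    · rintro ⟨hlen, hpos, hchain⟩
      match l with
      | [] => simp at hlen
      | v :: t =>
        obtain ⟨hvb, hchain'⟩ := List.chain_cons.mp hchain
        exact ⟨v, ⟨hpos v (by simp), hvb⟩, t, (ih v t).mpr ⟨by simpa using hlen,
          fun x hx => hpos x (by simp [hx]), hchain'⟩, rfl⟩

private lemma card_L7_succ (m b : ℕ) :
    (L7 (m + 1) b).card = ∑ v ∈ Finset.Icc 1 b, (L7 m (v + 1)).card := by
  show ((Finset.Icc 1 b).biUnion fun v => (L7 m (v + 1)).image fun l => v :: l).card = _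
  rw [Finset.card_biUnion]
  · exact Finset.sum_congr rfl fun v _ =>
      Finset.card_image_of_injective _ (List.cons_injective)
  · intro x _ y _ hxy
    simp only [Finset.disjoint_left, Finset.mem_image]
    rintro l ⟨t, -, rfl⟩ ⟨t', -, h⟩
    exact hxy ((List.cons_eq_cons.mp h).1).symm

private lemma card_L7_zero (b : ℕ) : (L7 0 b).card = 1 := rfl

private lemma card_L7_one (m : ℕ) : (L7 (m + 1) 1).card = (L7 m 2).card := by
  rw [card_L7_succ]; simp

private lemma card_L7_bot (m : ℕ) : (L7 (m + 1) 0).card = 0 := by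
  rw [card_L7_succ]; simp

private lemma card_L7_step (m b : ℕ) :
    (L7 (m + 1) (b + 1)).card = (L7 (m + 1) b).card + (L7 m (b + 2)).card := by
  rw [card_L7_succ, card_L7_succ, Finset.sum_Icc_succ_top (by omega : 1 ≤ b + 1)]

private lemma card_L7_1 (b : ℕ) : (L7 1 b).card = b := by
  induction b with
  | zero => exact card_L7_bot 0
  | succ b ih => rw [card_L7_step, ih, card_L7_zero]

private lemma key7 : ∀ m c : ℕ, (L7 (m + 1) (c + 1)).card + Nat.choose (2 * m + 2 + c) m
    = Nat.choose (2 * m + 2 + c) (m + 1) := by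
  intro m
  induction m with
  | zero =>
    intro c
    rw [card_L7_1]
    simp [Nat.choose_one_right]
    omega
  | succ m ihm =>
    intro c
    induction c with
    | zero =>
      have h2 : (L7 (m + 1 + 1) (0 + 1)).card = (L7 (m + 1) (1 + 1)).card := card_L7_one (m + 1)
      have h1 := ihm 1
      have p1 : Nat.choose (2 * (m + 1) + 2 + 0) (m + 1 + 1)
          = Nat.choose (2 * m + 2 + 1) (m + 1) + Nat.choose (2 * m + 2 + 1) (m + 1 + 1) := by
        rw [show 2 * (m + 1) + 2 + 0 = (2 * m + 2 + 1) + 1 by ring]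
        exact Nat.choose_succ_succ' (2 * m + 2 + 1) (m + 1)
      have p2 : Nat.choose (2 * (m + 1) + 2 + 0) (m + 1)
          = Nat.choose (2 * m + 2 + 1) m + Nat.choose (2 * m + 2 + 1) (m + 1) := by
        rw [show 2 * (m + 1) + 2 + 0 = (2 * m + 2 + 1) + 1 by ring]
        exact Nat.choose_succ_succ' (2 * m + 2 + 1) m
      have p3 : Nat.choose (2 * m + 2 + 1) (m + 1 + 1) = Nat.choose (2 * m + 2 + 1) (m + 1) := by
        have h := Nat.choose_symm (show m + 1 + 1 ≤ 2 * m + 2 + 1 by omega)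
        rw [show 2 * m + 2 + 1 - (m + 1 + 1) = m + 1 by omega] at h
        exact h.symm
      omega
    | succ c ihc =>
      have hA : (L7 (m + 1 + 1) (c + 1 + 1)).card
          = (L7 (m + 1 + 1) (c + 1)).card + (L7 (m + 1) (c + 1 + 2)).card :=
        card_L7_step (m + 1) (c + 1)
      have hB : (L7 (m + 1) (c + 1 + 2)).card + Nat.choose (2 * (m + 1) + 2 + c) m
          = Nat.choose (2 * (m + 1) + 2 + c) (m + 1) := by
        have h := ihm (c + 2)
        rw [show 2 * m + 2 + (c + 2) = 2 * (m + 1) + 2 + c by ring] at h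
        exact h
      have p1 : Nat.choose (2 * (m + 1) + 2 + (c + 1)) (m + 1 + 1)
          = Nat.choose (2 * (m + 1) + 2 + c) (m + 1) + Nat.choose (2 * (m + 1) + 2 + c) (m + 1 + 1) := by
        rw [show 2 * (m + 1) + 2 + (c + 1) = (2 * (m + 1) + 2 + c) + 1 by ring]
        exact Nat.choose_succ_succ' _ (m + 1)
      have p2 : Nat.choose (2 * (m + 1) + 2 + (c + 1)) (m + 1)
          = Nat.choose (2 * (m + 1) + 2 + c) m + Nat.choose (2 * (m + 1) + 2 + c) (m + 1) := by
        rw [show 2 * (m + 1) + 2 + (c + 1) = (2 * (m + 1) + 2 + c) + 1 by ring]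
        exact Nat.choose_succ_succ' _ m
      omega

private lemma L7_len {m : ℕ} {l : List ℕ} (hl : l ∈ L7 m 2) : l.length = m :=
  ((mem_L7 m 1 l).mp hl).1

private lemma chain_iff_get7 {α : Type*} {R : α → α → Prop} {a : α} {l : List α} :
    List.Chain R a l ↔ (∀ h : 0 < l.length, R a (l.get ⟨0, h⟩)) ∧
      ∀ (i : ℕ) (h : i < l.length - 1), R (l.get ⟨i, by omega⟩) (l.get ⟨i + 1, by omega⟩) := by
  unfold List.Chain
  rw [List.isChain_iff_getElem]
  constructor
  · intro h
    refine ⟨fun h0 => by simpa using h 0 (by simpa using h0), fun i hi => h (i + 1) (by simp; omega)⟩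
  · rintro ⟨h1, h2⟩ i hi
    rcases i with _ | i
    · simpa using h1 (by simp at hi; omega)
    · simpa using h2 i (by simp at hi; omega)
private def toL7 (m : ℕ) (k : Fin (m + 1) → ℕ) : List ℕ :=
  List.ofFn (fun i : Fin m => k ⟨m - 1 - i.1, by omega⟩)

private def invK7 (m : ℕ) (l : List ℕ) (hl : l ∈ L7 m 2) : Fin (m + 1) → ℕ :=
  fun i => if h : i.1 < m then l.get ⟨m - 1 - i.1, by rw [L7_len hl]; omega⟩ else 1

private lemma toL7_mem (m : ℕ) (k : Fin (m + 1) → ℕ)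
    (h1 : ∀ i, 0 < k i)
    (h2 : ∀ i j : Fin (m + 1), (j : ℕ) = (i : ℕ) + 1 → k i ≤ k j + 1)
    (h3 : ∀ i : Fin (m + 1), (i : ℕ) = (m + 1) - 1 → k i = 1) :
    toL7 m k ∈ L7 m 2 := by
  apply (mem_L7 m 1 _).mpr
  refine ⟨by simp [toL7], ?_, ?_⟩
  · intro x hx
    simp only [toL7, List.mem_ofFn] at hx
    obtain ⟨i, rfl⟩ := hx
    exact h1 _
  · rw [chain_iff_get7]
    constructor
    · intro h
      have hm : 0 < m := by simpa [toL7] using h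
      rw [show (toL7 m k).get ⟨0, h⟩ = k ⟨m - 1 - 0, by omega⟩ by
        simp [toL7, List.get_ofFn]]
      have e1 : k ⟨m, by omega⟩ = 1 := h3 _ (by simp)
      calc k ⟨m - 1 - 0, by omega⟩ ≤ k ⟨m, by omega⟩ + 1 := h2 _ _ (by simp; omega)
        _ = 1 + 1 := by rw [e1]
    · intro i h
      simp only [toL7, List.length_ofFn] at h
      rw [show ((toL7 m k).get ⟨i, by simp [toL7]; omega⟩) = k ⟨m - 1 - i, by omega⟩ by
        simp [toL7, List.get_ofFn]]
      rw [show ((toL7 m k).get ⟨i + 1, by simp [toL7]; omega⟩) = k ⟨m - 1 - (i + 1), by omega⟩ by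
        simp [toL7, List.get_ofFn]]
      exact h2 _ _ (by simp; omega)

private lemma invK7_prop (m : ℕ) (l : List ℕ) (hl : l ∈ L7 m 2) :
    (∀ i, 0 < invK7 m l hl i) ∧
      (∀ i j : Fin (m + 1), (j : ℕ) = (i : ℕ) + 1 → invK7 m l hl i ≤ invK7 m l hl j + 1) ∧
      (∀ i : Fin (m + 1), (i : ℕ) = (m + 1) - 1 → invK7 m l hl i = 1) := by
  obtain ⟨hlen, hpos, hchain⟩ := (mem_L7 m 1 l).mp hl
  rw [chain_iff_get7] at hchain
  obtain ⟨hfirst, hpair⟩ := hchain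
  refine ⟨?_, ?_, ?_⟩
  · intro i
    unfold invK7
    split
    · exact hpos _ (List.get_mem l _)
    · norm_num
  · intro i j hij
    have hi : i.1 < m := by omega
    unfold invK7
    rw [dif_pos hi]
    by_cases hj : j.1 < m
    · rw [dif_pos hj]
      have hm2 : 1 ≤ j.1 := by omega
      have := hpair (m - 1 - j.1) (by omega)
      convert this using 3 <;> omega
    · rw [dif_neg hj]
      have hi0 : i.1 = m - 1 := by omega
      have := hfirst (by omega)
      rw [show (⟨0, by omega⟩ : Fin l.length) = ⟨m - 1 - i.1, by omega⟩ by
        apply Fin.ext; simp; omega] at this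
      omega
  · intro i hi
    unfold invK7
    rw [dif_neg (by omega)]

theorem stmt_7 (n : ℕ) (hn : 1 ≤ n) :
    Nat.card {k : Fin n → ℕ // (∀ i, 0 < k i) ∧
        (∀ i j : Fin n, (j : ℕ) = (i : ℕ) + 1 → k i ≤ k j + 1) ∧
        (∀ i : Fin n, (i : ℕ) = n - 1 → k i = 1)} =
      Nat.choose (2 * n) n / (n + 1) := by
  obtain ⟨m, rfl⟩ : ∃ m, n = m + 1 := ⟨n - 1, by omega⟩
  have hcard : Nat.card {k : Fin (m + 1) → ℕ // (∀ i, 0 < k i) ∧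
        (∀ i j : Fin (m + 1), (j : ℕ) = (i : ℕ) + 1 → k i ≤ k j + 1) ∧
        (∀ i : Fin (m + 1), (i : ℕ) = (m + 1) - 1 → k i = 1)} = (L7 m 2).card := by
    rw [← Nat.card_eq_finsetCard]
    apply Nat.card_congr
    apply Equiv.ofBijective
      (fun k => (⟨toL7 m k.1, toL7_mem m k.1 k.2.1 k.2.2.1 k.2.2.2⟩ : {l // l ∈ L7 m 2}))
    rw [Function.bijective_iff_has_inverse]
    refine ⟨fun l => ⟨invK7 m l.1 l.2, invK7_prop m l.1 l.2⟩, ?_, ?_⟩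
    · rintro ⟨k, h1, h2, h3⟩
      apply Subtype.ext
      funext i
      show invK7 m (toL7 m k) (toL7_mem m k h1 h2 h3) i = k i
      unfold invK7
      split
      · next h =>
        unfold toL7
        rw [List.get_ofFn]
        show k ⟨m - 1 - (m - 1 - i.1), by omega⟩ = k i
        congr 1
        apply Fin.ext
        simp
        omega
      · next h =>
        exact (h3 i (by omega)).symm
    · rintro ⟨l, hl⟩
      apply Subtype.ext
      show toL7 m (invK7 m l hl) = l
      apply List.ext_get
      · simp [toL7, L7_len hl]
      · intro i hi1 hi2
        have hlen := L7_len hl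
        have hi1' : i < m := by simpa [toL7] using hi1
        unfold toL7
        rw [List.get_ofFn]
        show invK7 m l hl ⟨m - 1 - i, by omega⟩ = l.get ⟨i, hi2⟩
        unfold invK7
        rw [dif_pos (show m - 1 - i < m by omega)]
        congr 1
        apply Fin.ext
        simp
        omega
  rw [hcard]
  clear hcard hn
  rcases m with _ | m
  · norm_num [card_L7_zero]
  · have hk := key7 m 1
    rw [show 2 * m + 2 + 1 = 2 * m + 3 by ring] at hk
    set A := Nat.choose (2 * m + 3) (m + 1) with hAdef
    set B := Nat.choose (2 * m + 3) m with hBdef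
    have hAB : A * (m + 1) = B * (m + 1 + 1 + 1) := by
      have h := Nat.choose_succ_right_eq (2 * m + 3) m
      rw [show 2 * m + 3 - m = m + 1 + 1 + 1 by omega] at h
      exact h
    have hC : Nat.choose (2 * (m + 1 + 1)) (m + 1 + 1) = 2 * A := by
      have p1 : Nat.choose (2 * (m + 1 + 1)) (m + 1 + 1)
          = Nat.choose (2 * m + 3) (m + 1) + Nat.choose (2 * m + 3) (m + 1 + 1) := by
        rw [show 2 * (m + 1 + 1) = (2 * m + 3) + 1 by ring]
        exact Nat.choose_succ_succ' _ (m + 1)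
      have p3 : Nat.choose (2 * m + 3) (m + 1 + 1) = A := by
        have h := Nat.choose_symm (show m + 1 + 1 ≤ 2 * m + 3 by omega)
        rw [show 2 * m + 3 - (m + 1 + 1) = m + 1 by omega] at h
        exact h.symm
      rw [p1, p3]
      omega
    rw [hC]
    symm
    apply Nat.div_eq_of_eq_mul_left (show 0 < m + 1 + 1 + 1 by omega)
    have e3 : (L7 (m + 1) 2).card * (m + 1 + 1 + 1) + B * (m + 1 + 1 + 1)
        = A * (m + 1 + 1 + 1) := by
      rw [← add_mul, hk]
    have e4 : A * (m + 1 + 1 + 1) = A * (m + 1) + 2 * A := by ring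
    omega
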